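/- Let G be a Lie group acting smoothly on a smooth manifold M, and let ψ : M → 𝔤 be an infinitesimal gauge transformation. Then the induced vector field ∂(ψ), defined by ∂(ψ)(m) := T ev_m(ψ(m)), is a smooth vector field on M (smooth as a map M → TM) and is G-equivariant: for all g ∈ G and m ∈ M, ∂(ψ)(g·m) = T(g·)(∂(ψ)(m)). -/

import Mathlib

open scoped Manifold

/-- Let `G` be a Lie group acting smoothly on a smooth manifold `M`, and let
`ψ : M → 𝔤` be an infinitesimal gauge transformation (a smooth map that is equivariant with
respect to the adjoint action, `ψ (g • m) = Ad(g) (ψ m)`).  Then the induced vector field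
`∂(ψ) : m ↦ T ev_m (ψ m)` is a smooth vector field on `M` (smooth as a section `M → TM`) and is
`G`-equivariant: `∂(ψ)(g • m) = T(g •) (∂(ψ)(m))`. -/
theorem induced_vector_field_smooth_and_equivariant
    {EG : Type*} [NormedAddCommGroup EG] [NormedSpace ℝ EG]
    {HG : Type*} [TopologicalSpace HG] {IG : ModelWithCorners ℝ EG HG}
    {G : Type*} [TopologicalSpace G] [ChartedSpace HG G] [Group G]
    [IsManifold IG (⊤ : ℕ∞) G] [LieGroup IG (⊤ : ℕ∞) G]
    {EM : Type*} [NormedAddCommGroup EM] [NormedSpace ℝ EM]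
    {HM : Type*} [TopologicalSpace HM] {IM : ModelWithCorners ℝ EM HM}
    {M : Type*} [TopologicalSpace M] [ChartedSpace HM M] [IsManifold IM (⊤ : ℕ∞) M]
    [MulAction G M]
    (hact : ContMDiff (IG.prod IM) IM (⊤ : ℕ∞) fun p : G × M => p.1 • p.2)
    (ψ : M → EG)
    (hψ_smooth : ContMDiff IM 𝓘(ℝ, EG) (⊤ : ℕ∞) ψ)
    (hψ_equiv : ∀ (g : G) (m : M),
      ψ (g • m) = mfderiv IG IG (fun h : G => g * h * g⁻¹) (1 : G) (ψ m)) :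
    ContMDiff IM IM.tangent (⊤ : ℕ∞)
        (fun m : M =>
          (⟨m, mfderiv IG IM (fun g : G => g • m) (1 : G) (ψ m)⟩ : TangentBundle IM M)) ∧
      ∀ (g : G) (m : M),
        mfderiv IG IM (fun g' : G => g' • (g • m)) (1 : G) (ψ (g • m)) =
          mfderiv IM IM (fun p : M => g • p) m
            (mfderiv IG IM (fun g' : G => g' • m) (1 : G) (ψ m)) := by
  constructor
  · -- smoothness
    intro m₀
    rw [Bundle.contMDiffAt_totalSpace]
    refine ⟨contMDiffAt_id, ?_⟩
    have hD : ContMDiffAt IM 𝓘(ℝ, EG →L[ℝ] EM) (⊤ : ℕ∞)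
        (inTangentCoordinates IG IM (fun _ : M => (1 : G)) (fun m : M => (1 : G) • m)
          (fun m : M => mfderiv IG IM (fun g : G => g • m) (1 : G)) m₀) m₀ := by
      have hf : ContMDiffAt (IM.prod IG) IM (⊤ : ℕ∞)
          (Function.uncurry fun (m : M) (g : G) => g • m) (m₀, (1 : G)) :=
        (hact.comp (contMDiff_snd.prodMk contMDiff_fst)).contMDiffAt
      exact hf.mfderiv (fun (m : M) (g : G) => g • m) (fun _ => (1 : G))
        contMDiffAt_const (by simp)
    simp only [one_smul] at hD
    have hDψ := hD.clm_apply hψ_smooth.contMDiffAt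
    refine hDψ.congr_of_eventuallyEq ?_
    filter_upwards [(chartAt HM m₀).open_source.mem_nhds (mem_chart_source HM m₀)] with m hm
    erw [inTangentCoordinates_eq (I := IG) (I' := IM) (f := fun _ : M => (1 : G)) (g := fun m : M => m) _ (mem_chart_source HG (1 : G)) hm]
    erw [ContinuousLinearMap.comp_apply]
    change _ = ((tangentBundleCore IM M).coordChange (achart HM m) (achart HM m₀) m)
      (mfderiv IG IM (fun g : G => g • m) 1
        (((tangentBundleCore IG G).coordChange (achart HG 1) (achart HG 1) 1) (ψ m)))
    erw [(tangentBundleCore IG G).coordChange_self (achart _ (1 : G)) (1 : G)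
      (mem_achart_source HG (1 : G)) (ψ m)]
    rfl
  · -- equivariance
    intro g m
    have h1 : ((⊤ : ℕ∞) : WithTop ℕ∞) ≠ 0 := by simp
    set e : G → M := fun g' : G => g' • m with he_def
    set L : M → M := fun p : M => g • p with hL_def
    set c : G → G := fun h : G => g⁻¹ * h * (g⁻¹)⁻¹ with hc_def
    set a : G → G := fun h : G => g * h * g⁻¹ with ha_def
    have he : ContMDiff IG IM (⊤ : ℕ∞) e := hact.comp (contMDiff_id.prodMk contMDiff_const)
    have hL : ContMDiff IM IM (⊤ : ℕ∞) L := hact.comp (contMDiff_const.prodMk contMDiff_id)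
    have hc : ContMDiff IG IG (⊤ : ℕ∞) c := (contMDiff_const.mul contMDiff_id).mul contMDiff_const
    have ha : ContMDiff IG IG (⊤ : ℕ∞) a := (contMDiff_const.mul contMDiff_id).mul contMDiff_const
    have hc1 : c 1 = 1 := by simp [hc_def]
    have hec1 : (e ∘ c) 1 = m := by simp [he_def, hc_def]
    have ha1 : a 1 = 1 := by simp [ha_def]
    have key1 : (fun g' : G => g' • (g • m)) = L ∘ (e ∘ c) := by
      funext g'
      simp only [Function.comp_apply, hL_def, he_def, hc_def, inv_inv, smul_smul]
      congr 1
      group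
    have hca : c ∘ a = id := by
      funext h
      simp only [Function.comp_apply, hc_def, ha_def, inv_inv, id_eq]
      group
    -- derivative of c ∘ a is the identity
    have hAd : mfderiv IG IG c 1 (mfderiv IG IG a 1 (ψ m)) = ψ m := by
      have hcomp : mfderiv IG IG (c ∘ a) 1 =
          (mfderiv IG IG c (a 1)).comp (mfderiv IG IG a 1) :=
        mfderiv_comp 1 (hc.mdifferentiableAt h1) (ha.mdifferentiableAt h1)
      rw [hca, mfderiv_id] at hcomp
      rw [ha1] at hcomp
      have := DFunLike.congr_fun hcomp.symm (ψ m)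
      exact this
    have hstep1 : mfderiv IG IM (fun g' : G => g' • (g • m)) 1 =
        (mfderiv IM IM L ((e ∘ c) 1)).comp (mfderiv IG IM (e ∘ c) 1) := by
      rw [key1]
      exact mfderiv_comp 1 (hL.mdifferentiableAt h1)
        ((he.comp hc).mdifferentiableAt h1)
    have hstep2 : mfderiv IG IM (e ∘ c) 1 =
        (mfderiv IG IM e (c 1)).comp (mfderiv IG IG c 1) :=
      mfderiv_comp 1 (he.mdifferentiableAt h1) (hc.mdifferentiableAt h1)
    rw [hψ_equiv g m, hstep1, hec1, hstep2, hc1]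
    exact congrArg (fun v => mfderiv IM IM L m (mfderiv IG IM e 1 v)) hAd
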